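/- Under the same hypotheses (K bounded on a Hilbert space H, closed subspaces Z_p with K(Z_{p-1}) ⊆ Z_p and K*(Z_{p-1}) ⊆ Z_p for p ≥ 1, orthogonal projections P_p, and C := max{‖(I−P₀)K‖, ‖(I−P₀)K*‖}), for every r ≥ 1 and every p ≥ r−1 one has ‖(I−P_p)K^r‖ ≤ C^r. -/

import Mathlib

open ContinuousLinearMap

/-- The orthogonal projection onto a submodule, as an operator on the ambient space. -/
noncomputable def proj {H : Type*} [NormedAddCommGroup H] [InnerProductSpace ℝ H]
    (Z : Submodule ℝ H) [Z.HasOrthogonalProjection] : H →L[ℝ] H :=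
  Z.subtypeL.comp Z.orthogonalProjectionOnto

lemma proj_apply_of_mem {H : Type*} [NormedAddCommGroup H] [InnerProductSpace ℝ H]
    (Z : Submodule ℝ H) [Z.HasOrthogonalProjection] {x : H} (hx : x ∈ Z) :
    proj Z x = x := by
  simp only [_root_.proj, comp_apply, Submodule.subtypeL_apply]
  exact (Submodule.starProjection_eq_self_iff (K := Z)).mpr hx

lemma norm_one_sub_proj_apply_le {H : Type*} [NormedAddCommGroup H] [InnerProductSpace ℝ H]
    (Z : Submodule ℝ H) [Z.HasOrthogonalProjection] (x : H) :
    ‖(1 - proj Z) x‖ ≤ ‖x‖ := by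
  have h : (1 - proj Z) x = (Zᗮ.orthogonalProjectionOnto x : H) := by
    rw [Submodule.orthogonalProjectionOnto_orthogonal]
    rfl
  rw [h]
  simpa using (Zᗮ.orthogonalProjectionOnto).le_opNorm x |>.trans
    (by nlinarith [Submodule.orthogonalProjectionOnto_norm_le Zᗮ, norm_nonneg x,
      norm_nonneg (Zᗮ.orthogonalProjectionOnto)])

theorem stmt2 {H : Type*} [NormedAddCommGroup H] [InnerProductSpace ℝ H] [CompleteSpace H]
    (K : H →L[ℝ] H) (Z : ℕ → Submodule ℝ H) [∀ p, (Z p).HasOrthogonalProjection]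
    (hmono : Monotone Z)
    (hK : ∀ p : ℕ, 1 ≤ p → ∀ x ∈ Z (p - 1), K x ∈ Z p)
    (hKadj : ∀ p : ℕ, 1 ≤ p → ∀ x ∈ Z (p - 1), ContinuousLinearMap.adjoint K x ∈ Z p)
    (C : ℝ)
    (hC : C = max ‖(1 - proj (Z 0)).comp K‖
               ‖(1 - proj (Z 0)).comp (ContinuousLinearMap.adjoint K)‖)
    (r p : ℕ) (hr : 1 ≤ r) (hp : r - 1 ≤ p) :
    ‖(1 - proj (Z p)).comp (K ^ r)‖ ≤ C ^ r := by
  have hC0 : 0 ≤ C := hC ▸ le_trans (norm_nonneg _) (le_max_left _ _)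
  -- key lemma: for any p, ‖(1 - P_p) ∘ K‖ ≤ C
  have key : ∀ q : ℕ, ‖(1 - proj (Z q)).comp K‖ ≤ C := by
    intro q
    have hZ : Z 0 ≤ Z q := hmono (Nat.zero_le q)
    have hle : ∀ x : H, ‖((1 - proj (Z q)).comp K) x‖ ≤ ‖(1 - proj (Z 0)).comp K‖ * ‖x‖ := by
      intro x
      have heq : ((1 - proj (Z q)).comp K) x = (1 - proj (Z q)) (((1 - proj (Z 0)).comp K) x) := by
        simp only [comp_apply, sub_apply, ContinuousLinearMap.one_def, ContinuousLinearMap.id_apply, map_sub]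
        have : proj (Z q) (proj (Z 0) (K x)) = proj (Z 0) (K x) := by
          apply proj_apply_of_mem
          exact hZ (by simp [_root_.proj, Submodule.coe_mem])
        rw [this]; abel
      rw [heq]
      exact (norm_one_sub_proj_apply_le _ _).trans (((1 - _root_.proj (Z 0)).comp K).le_opNorm x)
    exact hC ▸ le_trans (opNorm_le_bound _ (norm_nonneg _) hle) (le_max_left _ _)
  induction r generalizing p with
  | zero => omega
  | succ n ih =>
    rcases Nat.eq_zero_or_pos n with hn | hn
    · subst hn
      simpa using key p
    · have hp1 : 1 ≤ p := by omega
      -- (1-P_p) ∘ K^{n+1} = ((1-P_p) ∘ K) ∘ ((1-P_{p-1}) ∘ K^n)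
      have heq : (1 - _root_.proj (Z p)).comp (K ^ (n + 1)) =
          ((1 - _root_.proj (Z p)).comp K).comp ((1 - _root_.proj (Z (p - 1))).comp (K ^ n)) := by
        ext x
        simp only [comp_apply, sub_apply, ContinuousLinearMap.one_def, ContinuousLinearMap.id_apply, map_sub, pow_succ']
        have hmem : K (_root_.proj (Z (p - 1)) ((K ^ n) x)) ∈ Z p :=
          hK p hp1 _ (by simp [_root_.proj, Submodule.coe_mem])
        have h0 : _root_.proj (Z p) (K (_root_.proj (Z (p - 1)) ((K ^ n) x))) =
            K (_root_.proj (Z (p - 1)) ((K ^ n) x)) := proj_apply_of_mem _ hmem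
        rw [h0]; abel
      rw [heq, pow_succ]
      calc ‖((1 - _root_.proj (Z p)).comp K).comp ((1 - _root_.proj (Z (p - 1))).comp (K ^ n))‖
          ≤ ‖(1 - _root_.proj (Z p)).comp K‖ * ‖(1 - _root_.proj (Z (p - 1))).comp (K ^ n)‖ :=
            opNorm_comp_le _ _
        _ ≤ C * C ^ n := by
            apply mul_le_mul (key p) (ih (p - 1) hn (by omega)) (norm_nonneg _) hC0
        _ = C ^ n * C := mul_comm _ _
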